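/- For any finite simple graph G = (V, E), the all-ones vector over F_2 lies in the image of the matrix A + I, where A is the adjacency matrix of G over F_2 and I is the identity. Equivalently, in the sigma-plus game (pushing a vertex toggles its own state and that of all its neighbors), the all-on configuration can be reached from the all-off configuration. -/

import Mathlib

open Matrix Finset

lemma adj_quad {V : Type*} [Fintype V] [DecidableEq V] (G : SimpleGraph V)
    [DecidableRel G.Adj] (y : V → ZMod 2) :
    ((G.adjMatrix (ZMod 2)).mulVec y) ⬝ᵥ y = 0 := by
  classical
  have hrw : ((G.adjMatrix (ZMod 2)).mulVec y) ⬝ᵥ y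
      = ∑ p ∈ (univ ×ˢ univ : Finset (V × V)),
          y p.1 * (G.adjMatrix (ZMod 2) p.1 p.2 * y p.2) := by
    rw [dotProduct_comm, Finset.sum_product]
    simp only [dotProduct, Matrix.mulVec, Finset.mul_sum]
  rw [hrw]
  refine Finset.sum_ninvolution (fun p => (p.2, p.1)) ?_ ?_ (by simp) (by simp)
  · rintro ⟨i, j⟩
    have hsym : G.adjMatrix (ZMod 2) j i = G.adjMatrix (ZMod 2) i j := by
      simp [SimpleGraph.adjMatrix_apply, SimpleGraph.adj_comm]
    simp only [hsym]
    have : y j * (G.adjMatrix (ZMod 2) i j * y i)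
        = y i * (G.adjMatrix (ZMod 2) i j * y j) := by ring
    rw [this]
    exact CharTwo.add_self_eq_zero _
  · rintro ⟨i, j⟩ h
    simp only [ne_eq, Prod.mk.injEq, not_and]
    intro hij
    exfalso
    apply h
    subst hij
    simp

lemma quad_one {V : Type*} [Fintype V] [DecidableEq V] (G : SimpleGraph V)
    [DecidableRel G.Adj] (y : V → ZMod 2) :
    ((G.adjMatrix (ZMod 2) + 1).mulVec y) ⬝ᵥ y = ∑ i, y i := by
  rw [Matrix.add_mulVec, add_dotProduct, adj_quad, Matrix.one_mulVec, zero_add]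
  refine Finset.sum_congr rfl fun i _ => ?_
  rw [← sq]
  exact ZMod.pow_card (y i)

/-- Sutner's theorem: for the sigma-plus game on any finite simple graph,
the all-on configuration is reachable from the all-off configuration,
i.e. the all-ones vector over `F_2` lies in the image of `A + I`. -/
theorem stmt_0 (V : Type*) [Fintype V] [DecidableEq V] (G : SimpleGraph V)
    [DecidableRel G.Adj] :
    ∃ x : V → ZMod 2, (G.adjMatrix (ZMod 2) + 1).mulVec x = fun _ => 1 := by
  classical
  set M := G.adjMatrix (ZMod 2) + 1 with hM
  set W : Subspace (ZMod 2) (V → ZMod 2) := LinearMap.range M.mulVecLin with hW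
  suffices h : (fun _ => (1 : ZMod 2)) ∈ W by
    obtain ⟨x, hx⟩ := h
    exact ⟨x, hx⟩
  rw [← Subspace.forall_mem_dualAnnihilator_apply_eq_zero_iff W]
  intro φ hφ
  set y : V → ZMod 2 := fun i => φ (Pi.single i 1) with hy
  have hφ_eq : ∀ x : V → ZMod 2, φ x = x ⬝ᵥ y := by
    intro x
    conv_lhs => rw [pi_eq_sum_univ x]
    rw [map_sum]
    simp only [_root_.map_smul, smul_eq_mul, dotProduct, hy]
    refine Finset.sum_congr rfl fun i _ => ?_
    have : (fun j => if i = j then (1 : ZMod 2) else 0) = Pi.single i 1 := by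
      funext j
      simp [Pi.single_apply, eq_comm]
    rw [this]
  have hMy : φ (M.mulVec y) = 0 := by
    rw [Submodule.mem_dualAnnihilator] at hφ
    exact hφ _ ⟨y, rfl⟩
  have key : (∑ i, y i) = 0 := by
    rw [← quad_one G y, ← hM, ← hφ_eq]
    exact hMy
  rw [hφ_eq]
  simpa [dotProduct] using key
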